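/- arXiv:1209.2259 — 3 statements merged into one kernel-verified Lean document; each statement's English description precedes it below -/
import Mathlib

section
/- For all (s₁,s₂) ∈ ℝ², the inequalities (√3/3)·f(s₁,s₂) ≤ f̃(s₁,s₂) ≤ √3·f(s₁,s₂) hold, where f(s₁,s₂) = 4 − 2cos s₁ − 2cos s₂ and f̃(s₁,s₂) = (√3/3)(6 − 2cos s₁ − 2cos s₂ − 2cos(s₁+s₂)). In other words, the generating function f̃ arising from linear finite elements on a uniform equilateral-triangle mesh is equivalent to the classical discrete-Laplacian generating function f. -/
/-- pointwise equivalence of the FE generating function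
`f̃(s₁,s₂) = (√3/3)(6 − 2cos s₁ − 2cos s₂ − 2cos(s₁+s₂))` and the classical
discrete-Laplacian generating function `f(s₁,s₂) = 4 − 2cos s₁ − 2cos s₂`:
for all `(s₁,s₂) ∈ ℝ²`, `(√3/3)·f ≤ f̃ ≤ √3·f`. -/
theorem generating_functions_equivalent (s₁ s₂ : ℝ) :
    (Real.sqrt 3 / 3) * (4 - 2 * Real.cos s₁ - 2 * Real.cos s₂) ≤
        (Real.sqrt 3 / 3) *
          (6 - 2 * Real.cos s₁ - 2 * Real.cos s₂ - 2 * Real.cos (s₁ + s₂)) ∧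
      (Real.sqrt 3 / 3) *
          (6 - 2 * Real.cos s₁ - 2 * Real.cos s₂ - 2 * Real.cos (s₁ + s₂)) ≤
        Real.sqrt 3 * (4 - 2 * Real.cos s₁ - 2 * Real.cos s₂) := by
  have h3 : (0:ℝ) ≤ Real.sqrt 3 := Real.sqrt_nonneg 3
  have hc := Real.cos_le_one (s₁ + s₂)
  have key : 6 - 4 * Real.cos s₁ - 4 * Real.cos s₂ + 2 * Real.cos (s₁ + s₂) ≥ 0 := by
    rw [Real.cos_add]
    nlinarith [Real.sin_sq_add_cos_sq s₁, Real.sin_sq_add_cos_sq s₂,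
      sq_nonneg (Real.cos s₁ - Real.cos s₂), sq_nonneg (Real.sin s₁ + Real.sin s₂),
      sq_nonneg (Real.cos s₁ + Real.cos s₂ - 2), sq_nonneg (Real.sin s₁ - Real.sin s₂)]
  constructor
  · nlinarith
  · nlinarith
end

section
/- Strict positivity of the Toeplitz operator: if g is a real-valued function on ℝ², 2π-periodic in each variable, Lebesgue integrable on (−π,π]², with g(s) ≥ 0 for almost every s ∈ (−π,π]² and g not equal to zero almost everywhere, then for every order N = (N₁,N₂) the Hermitian matrix T_N(g) is positive definite. -/
open MeasureTheory Matrix Real Filter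
open scoped ComplexOrder

/-- The `j`-th Fourier coefficient `a_j(g) = (1/(4π²)) ∫_{(−π,π]²} g(s) e^{−i⟨j,s⟩} ds`
of an integrable function `g : ℝ² → ℝ`. -/
noncomputable def fourierCoef (g : ℝ × ℝ → ℝ) (j : ℤ × ℤ) : ℂ :=
  (1 / (4 * (Real.pi : ℂ) ^ 2)) *
    ∫ s in Set.Ioc (-Real.pi) Real.pi ×ˢ Set.Ioc (-Real.pi) Real.pi,
      (g s : ℂ) * Complex.exp (-Complex.I * ((j.1 : ℂ) * s.1 + (j.2 : ℂ) * s.2))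

/-- The two-level Toeplitz matrix `T_N(g)` of order `N = (N₁, N₂)` generated by `g`,
with entries `(T_N(g))_{(p,q),(r,t)} = a_{(p−r, q−t)}(g)`. -/
noncomputable def toeplitz (N₁ N₂ : ℕ) (g : ℝ × ℝ → ℝ) :
    Matrix (Fin N₁ × Fin N₂) (Fin N₁ × Fin N₂) ℂ :=
  Matrix.of fun p q =>
    fourierCoef g ((p.1 : ℤ) - (q.1 : ℤ), (p.2 : ℤ) - (q.2 : ℤ))

-- ## Auxiliary lemmas

lemma expI_injOn : Set.InjOn (fun t : ℝ => Complex.exp (Complex.I * t)) (Set.Ioc (-π) π) := by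
  intro s hs t ht h
  simp only at h
  rw [Complex.exp_eq_exp_iff_exists_int] at h
  obtain ⟨n, hn⟩ := h
  have h2 : (s : ℂ) = t + n * (2 * π) := by
    have heq : Complex.I * s = Complex.I * ((t : ℂ) + n * (2 * π)) := by rw [hn]; ring
    exact mul_left_cancel₀ Complex.I_ne_zero heq
  have h3 : s = t + n * (2 * π) := by exact_mod_cast h2
  have hπ := Real.pi_pos
  have hn0 : n = 0 := by
    rcases lt_trichotomy n 0 with h | h | h
    · have : (n : ℝ) ≤ -1 := by
        have : n ≤ -1 := by omega
        exact_mod_cast this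
      nlinarith [hs.1, hs.2, ht.1, ht.2]
    · exact h
    · have : (1 : ℝ) ≤ (n : ℝ) := by exact_mod_cast h
      nlinarith [hs.1, hs.2, ht.1, ht.2]
  simp [hn0] at h3
  exact h3

lemma trig_finite {n : ℕ} (w : Fin n → ℂ) (hw : w ≠ 0) :
    {t : ℝ | t ∈ Set.Ioc (-π) π ∧
      ∑ k : Fin n, w k * Complex.exp (Complex.I * ((k : ℕ) * t)) = 0}.Finite := by
  obtain ⟨k₀, hk₀⟩ := Function.ne_iff.mp hw
  set Q : Polynomial ℂ := ∑ k : Fin n, Polynomial.C (w k) * Polynomial.X ^ (k : ℕ) with hQdef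
  have hQ : Q ≠ 0 := by
    intro h
    have : Q.coeff (k₀ : ℕ) = w k₀ := by
      rw [hQdef]
      rw [Polynomial.finset_sum_coeff]
      simp only [Polynomial.coeff_C_mul, Polynomial.coeff_X_pow]
      rw [Finset.sum_eq_single k₀]
      · simp
      · intro b _ hb
        simp [Fin.val_eq_val, Ne.symm hb]
      · simp
    rw [h] at this
    simp at this
    exact hk₀ this.symm
  have hroots : {z : ℂ | Q.IsRoot z}.Finite := Polynomial.finite_setOf_isRoot hQ
  have hsub : {t : ℝ | t ∈ Set.Ioc (-π) π ∧
      ∑ k : Fin n, w k * Complex.exp (Complex.I * ((k : ℕ) * t)) = 0} ⊆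
      Set.Ioc (-π) π ∩ (fun t : ℝ => Complex.exp (Complex.I * t)) ⁻¹' {z | Q.IsRoot z} := by
    intro t ⟨ht, hsum⟩
    refine ⟨ht, ?_⟩
    simp only [Set.mem_preimage, Set.mem_setOf_eq, Polynomial.IsRoot, hQdef,
      Polynomial.eval_finset_sum, Polynomial.eval_mul, Polynomial.eval_C, Polynomial.eval_pow,
      Polynomial.eval_X]
    rw [← hsum]
    congr 1
    funext k
    congr 1
    rw [← Complex.exp_nat_mul]
    ring_nf
  refine Set.Finite.subset ?_ hsub
  apply Set.Finite.of_finite_image (f := fun t : ℝ => Complex.exp (Complex.I * t))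
  · exact hroots.subset (by rintro z ⟨t, ⟨_, ht⟩, rfl⟩; exact ht)
  · exact expI_injOn.mono Set.inter_subset_left

noncomputable def Ppoly {N₁ N₂ : ℕ} (v : Fin N₁ × Fin N₂ → ℂ) (s : ℝ × ℝ) : ℂ :=
  ∑ j : Fin N₁ × Fin N₂, v j *
    Complex.exp (Complex.I * ((j.1 : ℕ) * s.1 + (j.2 : ℕ) * s.2))

lemma Ppoly_continuous {N₁ N₂ : ℕ} (v : Fin N₁ × Fin N₂ → ℂ) : Continuous (Ppoly v) := by
  unfold Ppoly
  refine continuous_finset_sum _ fun j _ => ?_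
  exact continuous_const.mul (Complex.continuous_exp.comp (by fun_prop))

lemma Ppoly_split {N₁ N₂ : ℕ} (v : Fin N₁ × Fin N₂ → ℂ) (x y : ℝ) :
    Ppoly v (x, y) = ∑ q : Fin N₂,
      (∑ p : Fin N₁, v (p, q) * Complex.exp (Complex.I * ((p : ℕ) * x))) *
        Complex.exp (Complex.I * ((q : ℕ) * y)) := by
  unfold Ppoly
  rw [Fintype.sum_prod_type, Finset.sum_comm]
  apply Finset.sum_congr rfl
  intro q _
  rw [Finset.sum_mul]
  apply Finset.sum_congr rfl
  intro p _
  rw [mul_assoc, ← Complex.exp_add]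
  ring_nf

lemma Ppoly_zero_null {N₁ N₂ : ℕ} (v : Fin N₁ × Fin N₂ → ℂ) (hv : v ≠ 0) :
    volume {s : ℝ × ℝ | s ∈ Set.Ioc (-π) π ×ˢ Set.Ioc (-π) π ∧ Ppoly v s = 0} = 0 := by
  obtain ⟨⟨p₀, q₀⟩, hpq⟩ := Function.ne_iff.mp hv
  have hbad : {x : ℝ | x ∈ Set.Ioc (-π) π ∧
      ∑ p : Fin N₁, v (p, q₀) * Complex.exp (Complex.I * ((p : ℕ) * x)) = 0}.Finite := by
    apply trig_finite
    intro h
    exact hpq (by simpa using congrFun h p₀)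
  set Z := {s : ℝ × ℝ | s ∈ Set.Ioc (-π) π ×ˢ Set.Ioc (-π) π ∧ Ppoly v s = 0} with hZ
  have hZm : MeasurableSet Z := by
    apply MeasurableSet.inter
    · exact (measurableSet_Ioc.prod measurableSet_Ioc)
    · exact (Ppoly_continuous v).measurable (measurableSet_singleton 0)
  rw [MeasureTheory.Measure.volume_eq_prod, Measure.prod_apply hZm]
  rw [lintegral_eq_zero_iff' ((measurable_measure_prodMk_left hZm).aemeasurable)]
  have h0 : ∀ x : ℝ, x ∉ {x : ℝ | x ∈ Set.Ioc (-π) π ∧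
      ∑ p : Fin N₁, v (p, q₀) * Complex.exp (Complex.I * ((p : ℕ) * x)) = 0} →
      volume (Prod.mk x ⁻¹' Z) = 0 := by
    intro x hx
    by_cases hxIoc : x ∈ Set.Ioc (-π) π
    · have hcne : (fun q : Fin N₂ => ∑ p : Fin N₁,
          v (p, q) * Complex.exp (Complex.I * ((p : ℕ) * x))) ≠ 0 := by
        intro h
        exact hx ⟨hxIoc, by simpa using congrFun h q₀⟩
      have hfin := trig_finite _ hcne
      refine measure_mono_null ?_ (hfin.measure_zero _)
      rintro y ⟨⟨_, hy2⟩, hP⟩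
      exact ⟨hy2, by rw [← Ppoly_split]; exact hP⟩
    · have he : Prod.mk x ⁻¹' Z = (∅ : Set ℝ) := by
        ext y
        simp only [Set.mem_preimage, hZ, Set.mem_setOf_eq, Set.mem_empty_iff_false, iff_false,
          Set.mem_prod]
        rintro ⟨⟨h1, _⟩, _⟩
        exact hxIoc h1
      rw [he]
      exact measure_empty
  filter_upwards [hbad.countable.ae_notMem (volume : Measure ℝ)] with x hx
  exact h0 x hx

lemma integrable_g_exp (g : ℝ × ℝ → ℝ)
    (hint : IntegrableOn g (Set.Ioc (-π) π ×ˢ Set.Ioc (-π) π))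
    (φ : ℝ × ℝ → ℝ) (hφ : Continuous φ) :
    Integrable (fun s => (g s : ℂ) * Complex.exp (Complex.I * φ s))
      (volume.restrict (Set.Ioc (-π) π ×ˢ Set.Ioc (-π) π)) := by
  have h1 : Integrable (fun s : ℝ × ℝ => (g s : ℂ))
      (volume.restrict (Set.Ioc (-π) π ×ˢ Set.Ioc (-π) π)) := hint.ofReal
  have := h1.bdd_mul (f := fun s => Complex.exp (Complex.I * φ s))
    (Complex.continuous_exp.comp
      (continuous_const.mul (Complex.continuous_ofReal.comp hφ))).aestronglyMeasurable
    (c := 1) (ae_of_all _ fun s => by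
      show ‖Complex.exp (Complex.I * φ s)‖ ≤ 1
      rw [mul_comm, Complex.norm_exp_ofReal_mul_I])
  simpa [mul_comm] using this

lemma dot_eq (g : ℝ × ℝ → ℝ) {N₁ N₂ : ℕ} (v : Fin N₁ × Fin N₂ → ℂ)
    (hint : IntegrableOn g (Set.Ioc (-π) π ×ˢ Set.Ioc (-π) π)) :
    star v ⬝ᵥ (toeplitz N₁ N₂ g).mulVec v =
      ((1 / (4 * π ^ 2) *
        ∫ s in Set.Ioc (-π) π ×ˢ Set.Ioc (-π) π,
          g s * Complex.normSq (Ppoly v s) : ℝ) : ℂ) := by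
  classical
  have hpt : ∀ s : ℝ × ℝ,
      ∑ jk : (Fin N₁ × Fin N₂) × (Fin N₁ × Fin N₂),
        (starRingEnd ℂ) (v jk.1) * v jk.2 *
          ((g s : ℂ) * Complex.exp (-Complex.I *
            (((((jk.1.1 : ℤ) - (jk.2.1 : ℤ)) : ℤ) : ℂ) * s.1 +
             ((((jk.1.2 : ℤ) - (jk.2.2 : ℤ)) : ℤ) : ℂ) * s.2))) =
      (g s : ℂ) * (Complex.normSq (Ppoly v s) : ℂ) := by
    intro s
    rw [Complex.normSq_eq_conj_mul_self]
    unfold Ppoly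
    rw [map_sum, Finset.sum_mul_sum, Finset.mul_sum, Fintype.sum_prod_type]
    simp only [Finset.mul_sum]
    apply Finset.sum_congr rfl
    intro j _
    apply Finset.sum_congr rfl
    intro k _
    have hconj : (starRingEnd ℂ)
        (v j * Complex.exp (Complex.I * ((j.1 : ℕ) * s.1 + (j.2 : ℕ) * s.2))) =
        (starRingEnd ℂ) (v j) *
          Complex.exp (-Complex.I * ((j.1 : ℕ) * s.1 + (j.2 : ℕ) * s.2)) := by
      rw [_root_.map_mul, ← Complex.exp_conj]
      congr 2
      simp [map_add, _root_.map_mul, Complex.conj_ofReal]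
    rw [hconj]
    have hexp : Complex.exp (-Complex.I *
            (((((j.1 : ℤ) - (k.1 : ℤ)) : ℤ) : ℂ) * s.1 +
             ((((j.2 : ℤ) - (k.2 : ℤ)) : ℤ) : ℂ) * s.2)) =
        Complex.exp (-Complex.I * ((j.1 : ℕ) * s.1 + (j.2 : ℕ) * s.2)) *
          Complex.exp (Complex.I * ((k.1 : ℕ) * s.1 + (k.2 : ℕ) * s.2)) := by
      rw [← Complex.exp_add]
      congr 1
      push_cast
      ring
    rw [hexp]
    ring
  have step1 : star v ⬝ᵥ (toeplitz N₁ N₂ g).mulVec v =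
      ∑ jk : (Fin N₁ × Fin N₂) × (Fin N₁ × Fin N₂),
        (starRingEnd ℂ) (v jk.1) * v jk.2 *
          fourierCoef g ((jk.1.1 : ℤ) - (jk.2.1 : ℤ), (jk.1.2 : ℤ) - (jk.2.2 : ℤ)) := by
    simp only [dotProduct, mulVec, toeplitz, Matrix.of_apply, Finset.mul_sum,
      Pi.star_apply, RCLike.star_def, Fintype.sum_prod_type]
    apply Finset.sum_congr rfl
    intro a _
    apply Finset.sum_congr rfl
    intro b _
    apply Finset.sum_congr rfl
    intro c _
    apply Finset.sum_congr rfl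
    intro d _
    ring
  have hintab : ∀ a b : ℤ, Integrable
      (fun s : ℝ × ℝ => (g s : ℂ) * Complex.exp (-Complex.I * ((a : ℂ) * s.1 + (b : ℂ) * s.2)))
      (volume.restrict (Set.Ioc (-π) π ×ˢ Set.Ioc (-π) π)) := by
    intro a b
    have h := integrable_g_exp g hint (fun s => -((a : ℝ) * s.1 + (b : ℝ) * s.2)) (by fun_prop)
    refine h.congr (Eventually.of_forall fun s => ?_)
    congr 1
    push_cast
    ring
  rw [step1]
  have step2 : ∀ jk : (Fin N₁ × Fin N₂) × (Fin N₁ × Fin N₂),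
      (starRingEnd ℂ) (v jk.1) * v jk.2 *
          fourierCoef g ((jk.1.1 : ℤ) - (jk.2.1 : ℤ), (jk.1.2 : ℤ) - (jk.2.2 : ℤ)) =
      (1 / (4 * (π : ℂ) ^ 2)) * ∫ s in Set.Ioc (-π) π ×ˢ Set.Ioc (-π) π,
        (starRingEnd ℂ) (v jk.1) * v jk.2 *
          ((g s : ℂ) * Complex.exp (-Complex.I *
            (((((jk.1.1 : ℤ) - (jk.2.1 : ℤ)) : ℤ) : ℂ) * s.1 +
             ((((jk.1.2 : ℤ) - (jk.2.2 : ℤ)) : ℤ) : ℂ) * s.2))) := by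
    intro jk
    rw [integral_const_mul ((starRingEnd ℂ) (v jk.1) * v jk.2)]
    unfold fourierCoef
    ring
  rw [Finset.sum_congr rfl (fun jk _ => step2 jk), ← Finset.mul_sum]
  rw [← integral_finset_sum _ (fun jk _ => ((hintab _ _).const_mul _))]
  rw [integral_congr_ae (Eventually.of_forall fun s => hpt s)]
  have hcoe : ∀ s : ℝ × ℝ, (g s : ℂ) * (Complex.normSq (Ppoly v s) : ℂ) =
      ((g s * Complex.normSq (Ppoly v s) : ℝ) : ℂ) := by
    intro s; push_cast; ring
  rw [integral_congr_ae (Eventually.of_forall fun s => hcoe s)]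
  have hOR : ∫ s in Set.Ioc (-π) π ×ˢ Set.Ioc (-π) π,
      ((g s * Complex.normSq (Ppoly v s) : ℝ) : ℂ) =
      ((∫ s in Set.Ioc (-π) π ×ˢ Set.Ioc (-π) π, g s * Complex.normSq (Ppoly v s) : ℝ) : ℂ) :=
    integral_ofReal
  rw [hOR]
  norm_cast

lemma conj_fourierCoef (g : ℝ × ℝ → ℝ) (m : ℤ × ℤ) :
    (starRingEnd ℂ) (fourierCoef g m) = fourierCoef g (-m.1, -m.2) := by
  unfold fourierCoef
  rw [_root_.map_mul, ← integral_conj]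
  congr 1
  · simp [map_div₀, _root_.map_mul, map_pow, Complex.conj_ofReal, map_ofNat]
  · apply integral_congr_ae
    apply Eventually.of_forall
    intro s
    dsimp only
    rw [_root_.map_mul, ← Complex.exp_conj]
    congr 1
    · exact Complex.conj_ofReal _
    · simp only [_root_.map_mul, map_add, map_neg, Complex.conj_I, Complex.conj_ofReal,
        map_intCast]
      push_cast
      ring

/-- strict positivity of the Toeplitz operator: if `g ≥ 0` a.e. on
`(−π,π]²`, `g` is `2π`-periodic in each variable, integrable on `(−π,π]²`, and `g` is
not zero almost everywhere, then `T_N(g)` is Hermitian positive definite for every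
order `N = (N₁,N₂)`. -/
theorem toeplitz_posDef (g : ℝ × ℝ → ℝ)
    (hper₁ : ∀ s : ℝ × ℝ, g (s.1 + 2 * π, s.2) = g s)
    (hper₂ : ∀ s : ℝ × ℝ, g (s.1, s.2 + 2 * π) = g s)
    (hint : IntegrableOn g (Set.Ioc (-π) π ×ˢ Set.Ioc (-π) π))
    (hnonneg : ∀ᵐ s ∂(volume.restrict (Set.Ioc (-π) π ×ˢ Set.Ioc (-π) π)), 0 ≤ g s)
    (hnonzero : ¬ ∀ᵐ s ∂(volume.restrict (Set.Ioc (-π) π ×ˢ Set.Ioc (-π) π)), g s = 0)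
    (N₁ N₂ : ℕ) :
    (toeplitz N₁ N₂ g).PosDef := by
  rw [posDef_iff_dotProduct_mulVec]
  constructor
  · -- Hermitian
    show (toeplitz N₁ N₂ g)ᴴ = toeplitz N₁ N₂ g
    ext j k
    simp only [conjTranspose_apply, toeplitz, Matrix.of_apply, RCLike.star_def]
    rw [conj_fourierCoef]
    congr 1 <;> ring
  · -- positivity
    intro v hv
    rw [dot_eq g v hint, Complex.zero_lt_real]
    have hπ := Real.pi_pos
    have hB : ∃ C, ∀ s : ℝ × ℝ, ‖Complex.normSq (Ppoly v s)‖ ≤ C := by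
      refine ⟨(∑ j : Fin N₁ × Fin N₂, ‖v j‖) ^ 2, fun s => ?_⟩
      have habs : ‖Ppoly v s‖ ≤ ∑ j : Fin N₁ × Fin N₂, ‖v j‖ := by
        unfold Ppoly
        refine le_trans (norm_sum_le _ _) ?_
        apply Finset.sum_le_sum
        intro j _
        rw [norm_mul]
        have h1 : ‖Complex.exp (Complex.I *
            ((j.1 : ℕ) * s.1 + (j.2 : ℕ) * s.2))‖ = 1 := by
          rw [Complex.norm_exp]
          simp
        rw [h1, mul_one]
      rw [Real.norm_eq_abs, abs_of_nonneg (Complex.normSq_nonneg _),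
        ← Complex.sq_norm]
      exact pow_le_pow_left₀ (norm_nonneg _) habs 2
    have hf_int : Integrable (fun s => g s * Complex.normSq (Ppoly v s))
        (volume.restrict (Set.Ioc (-π) π ×ˢ Set.Ioc (-π) π)) := by
      have := hint.bdd_mul (f := fun s => Complex.normSq (Ppoly v s))
        ((Complex.continuous_normSq.comp (Ppoly_continuous v)).aestronglyMeasurable) (ae_of_all _ hB.choose_spec)
      simpa [mul_comm] using this
    have hf_nonneg : 0 ≤ᵐ[volume.restrict (Set.Ioc (-π) π ×ˢ Set.Ioc (-π) π)]
        fun s => g s * Complex.normSq (Ppoly v s) := by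
      filter_upwards [hnonneg] with s hs
      exact mul_nonneg hs (Complex.normSq_nonneg _)
    have hP_ne : ∀ᵐ s ∂(volume.restrict (Set.Ioc (-π) π ×ˢ Set.Ioc (-π) π)),
        Ppoly v s ≠ 0 := by
      have hnull := Ppoly_zero_null v hv
      rw [ae_iff]
      have hmeas : MeasurableSet {s : ℝ × ℝ | Ppoly v s = 0} :=
        (Ppoly_continuous v).measurable (measurableSet_singleton 0)
      rw [Measure.restrict_apply' (measurableSet_Ioc.prod measurableSet_Ioc)]
      refine measure_mono_null ?_ hnull
      intro s hs
      simp only [Set.mem_inter_iff, Set.mem_setOf_eq, not_not] at hs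
      exact ⟨hs.2, hs.1⟩
    have hne : ¬ ((fun s => g s * Complex.normSq (Ppoly v s)) =ᵐ[volume.restrict
        (Set.Ioc (-π) π ×ˢ Set.Ioc (-π) π)] 0) := by
      intro h
      apply hnonzero
      filter_upwards [h, hP_ne] with s h1 h2
      simp only [Pi.zero_apply] at h1
      rcases mul_eq_zero.mp h1 with h | h
      · exact h
      · exact absurd (Complex.normSq_eq_zero.mp h) h2
    have h0 : 0 ≤ ∫ s in Set.Ioc (-π) π ×ˢ Set.Ioc (-π) π,
        g s * Complex.normSq (Ppoly v s) := integral_nonneg_of_ae hf_nonneg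
    rcases h0.eq_or_lt with heq | hlt
    · exfalso
      exact hne ((integral_eq_zero_iff_of_nonneg_ae hf_nonneg hf_int).mp heq.symm)
    · positivity
end

section
/- Eigenvector matrix conditioning for the preconditioned convection-diffusion matrix with constant coefficients: let Θ be a real n × n symmetric positive definite matrix, Ψ a real n × n skew-symmetric matrix, and a > 0 a constant. Set A = aΘ + Ψ and P = aΘ. Then P⁻¹A can be diagonalized as P⁻¹A = V D V⁻¹ where D is a diagonal complex matrix all of whose diagonal entries have real part 1, and the eigenvector matrix V can be chosen of the form V = Θ^{−1/2} Q with Q unitary, so that the spectral condition number of V satisfies K₂(V) = K₂(Θ^{−1/2}) = √(λ_max(Θ)/λ_min(Θ)). -/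
open Matrix
open scoped ComplexOrder

/-- The spectral condition number `K₂(X) = ‖X‖₂ · ‖X⁻¹‖₂` of a complex matrix, with
`‖·‖₂` the operator norm induced by the Euclidean vector norm. -/
noncomputable def spectralCond {n : ℕ} (X : Matrix (Fin n) (Fin n) ℂ) : ℝ :=
  ‖Matrix.toEuclideanCLM (𝕜 := ℂ) X‖ * ‖Matrix.toEuclideanCLM (𝕜 := ℂ) X⁻¹‖

/-- The positive semidefinite square root of a positive semidefinite matrix, as
`Matrix.PosSemidef.sqrt` was defined in Mathlib of December 2024 (since removed). -/
noncomputable def posSemidefSqrt {n : Type*} [Fintype n] [DecidableEq n]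
    {A : Matrix n n ℝ} (hA : A.PosSemidef) : Matrix n n ℝ :=
  hA.1.eigenvectorUnitary.1 * diagonal ((↑) ∘ (√·) ∘ hA.1.eigenvalues) *
    (star hA.1.eigenvectorUnitary : Matrix n n ℝ)

section Aux

lemma toEuclideanCLM_diagonal_apply {n : ℕ} (d : Fin n → ℂ) (x : EuclideanSpace ℂ (Fin n)) (i : Fin n) :
    (Matrix.toEuclideanCLM (𝕜 := ℂ) (Matrix.diagonal d) x) i = d i * x i := by
  have h2 := congrFun (Matrix.ofLp_toEuclideanCLM (𝕜 := ℂ) (Matrix.diagonal d) x) i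
  simpa [Matrix.toLin'_apply, Matrix.mulVec_diagonal] using h2

lemma norm_toEuclideanCLM_diagonal {n : ℕ} (d : Fin n → ℂ) (c : ℝ)
    (hub : ∀ i, ‖d i‖ ≤ c) (hmem : ∃ i, ‖d i‖ = c) :
    ‖Matrix.toEuclideanCLM (𝕜 := ℂ) (Matrix.diagonal d)‖ = c := by
  have hc : 0 ≤ c := by obtain ⟨i, hi⟩ := hmem; exact hi ▸ norm_nonneg _
  apply le_antisymm
  · apply ContinuousLinearMap.opNorm_le_bound _ hc
    intro x
    rw [EuclideanSpace.norm_eq, EuclideanSpace.norm_eq]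
    rw [← Real.sqrt_sq hc, ← Real.sqrt_mul (by positivity)]
    apply Real.sqrt_le_sqrt
    rw [Finset.mul_sum]
    apply Finset.sum_le_sum
    intro i _
    rw [toEuclideanCLM_diagonal_apply, norm_mul, mul_pow]
    have := hub i
    have h2 : ‖d i‖^2 ≤ c^2 := by nlinarith [norm_nonneg (d i)]
    nlinarith [sq_nonneg ‖x i‖, norm_nonneg (x i)]
  · obtain ⟨i, hi⟩ := hmem
    have hx : ‖(EuclideanSpace.single i (1:ℂ) : EuclideanSpace ℂ (Fin n))‖ = 1 := by
      simp [EuclideanSpace.norm_single]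
    have happ : Matrix.toEuclideanCLM (𝕜 := ℂ) (Matrix.diagonal d) (EuclideanSpace.single i 1)
        = EuclideanSpace.single i (d i) := by
      ext j
      rw [toEuclideanCLM_diagonal_apply]
      by_cases h : j = i
      · subst h; simp
      · simp [EuclideanSpace.single_apply, h]
    calc c = ‖Matrix.toEuclideanCLM (𝕜 := ℂ) (Matrix.diagonal d) (EuclideanSpace.single i 1)‖ := by
            rw [happ, EuclideanSpace.norm_single, hi]
      _ ≤ ‖Matrix.toEuclideanCLM (𝕜 := ℂ) (Matrix.diagonal d)‖ * 1 := by
            rw [← hx]; exact (Matrix.toEuclideanCLM (𝕜 := ℂ) (Matrix.diagonal d)).le_opNorm _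
      _ = _ := mul_one _

variable {n : ℕ}

lemma ev_mem (Θ : Matrix (Fin n) (Fin n) ℝ) (hH : Θ.IsHermitian) (j : Fin n) :
    ∃ x : Fin n → ℝ, x ≠ 0 ∧ Θ.mulVec x = hH.eigenvalues j • x := by
  refine ⟨⇑(hH.eigenvectorBasis j), ?_, hH.mulVec_eigenvectorBasis j⟩
  intro h
  apply hH.eigenvectorBasis.orthonormal.ne_zero j
  ext i
  exact congrFun h i

lemma mem_ev (Θ : Matrix (Fin n) (Fin n) ℝ) (hH : Θ.IsHermitian) (μ : ℝ)
    (x : Fin n → ℝ) (hx : x ≠ 0) (hmv : Θ.mulVec x = μ • x) :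
    ∃ j, hH.eigenvalues j = μ := by
  set U : Matrix (Fin n) (Fin n) ℝ := (hH.eigenvectorUnitary : Matrix (Fin n) (Fin n) ℝ) with hUdef
  have hdet : (Θ - μ • 1).det = 0 := by
    rw [← Matrix.exists_mulVec_eq_zero_iff]
    refine ⟨x, hx, ?_⟩
    rw [Matrix.sub_mulVec, hmv, Matrix.smul_mulVec, Matrix.one_mulVec, sub_self]
  have hU : U * star U = 1 := Matrix.mem_unitaryGroup_iff.mp hH.eigenvectorUnitary.2
  have hdiag : (Matrix.diagonal (fun j => hH.eigenvalues j - μ))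
      = Matrix.diagonal (RCLike.ofReal ∘ hH.eigenvalues) - μ • (1 : Matrix (Fin n) (Fin n) ℝ) := by
    ext i j
    by_cases h : i = j <;> simp [h, Matrix.diagonal_apply, Matrix.one_apply]
  have key : U * (Matrix.diagonal (fun j => hH.eigenvalues j - μ)) * star U = Θ - μ • 1 := by
    rw [hdiag, Matrix.mul_sub, Matrix.sub_mul, Matrix.mul_smul, mul_one, Matrix.smul_mul, hU]
    conv_rhs => rw [hH.spectral_theorem]
    rw [Unitary.conjStarAlgAut_apply]
  rw [← key, Matrix.det_mul, Matrix.det_mul] at hdet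
  have hUdet : U.det * (star U).det = 1 := by rw [← Matrix.det_mul, hU, Matrix.det_one]
  rw [mul_comm U.det _, mul_assoc, hUdet, mul_one, Matrix.det_diagonal] at hdet
  obtain ⟨j, -, hj⟩ := Finset.prod_eq_zero_iff.mp hdet
  exact ⟨j, by linarith [sub_eq_zero.mp hj]⟩

-- map lemmas
lemma mapC_mul (M N : Matrix (Fin n) (Fin n) ℝ) :
    (M * N).map ((↑) : ℝ → ℂ) = M.map ((↑) : ℝ → ℂ) * N.map ((↑) : ℝ → ℂ) :=
  Matrix.map_mul (f := Complex.ofRealHom)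

lemma mapC_one : (1 : Matrix (Fin n) (Fin n) ℝ).map ((↑) : ℝ → ℂ) = 1 :=
  Matrix.map_one _ (by simp) (by simp)

lemma mapC_star (M : Matrix (Fin n) (Fin n) ℝ) :
    (star M).map ((↑) : ℝ → ℂ) = star (M.map ((↑) : ℝ → ℂ)) := by
  ext i j
  simp [Matrix.conjTranspose_apply, Matrix.map_apply, Complex.conj_ofReal]

end Aux

set_option maxHeartbeats 1000000 in
/-- eigenvector-matrix conditioning for the preconditioned
convection-diffusion matrix with constant coefficients.  Let `Θ` be real symmetric
positive definite, `Ψ` real skew-symmetric, `a > 0`, `A = aΘ + Ψ`, `P = aΘ`.  Then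
`P⁻¹A = V D V⁻¹` with `D` diagonal whose diagonal entries all have real part `1`, and
`V = Θ^{−1/2} Q` with `Q` unitary, so that
`K₂(V) = K₂(Θ^{−1/2}) = √(λ_max(Θ)/λ_min(Θ))`. -/
theorem preconditioned_eigenvector_conditioning (n : ℕ)
    (Θ Ψ : Matrix (Fin n) (Fin n) ℝ) (hΘ : Θ.PosDef) (hΨ : Ψᵀ = -Ψ)
    (a : ℝ) (ha : 0 < a)
    (A P : Matrix (Fin n) (Fin n) ℂ)
    (hA : A = (a : ℂ) • Θ.map ((↑) : ℝ → ℂ) + Ψ.map ((↑) : ℝ → ℂ))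
    (hP : P = (a : ℂ) • Θ.map ((↑) : ℝ → ℂ))
    (lmin lmax : ℝ)
    (hmin : IsLeast {μ : ℝ | ∃ x : Fin n → ℝ, x ≠ 0 ∧ Θ.mulVec x = μ • x} lmin)
    (hmax : IsGreatest {μ : ℝ | ∃ x : Fin n → ℝ, x ≠ 0 ∧ Θ.mulVec x = μ • x} lmax) :
    ∃ V D Q : Matrix (Fin n) (Fin n) ℂ,
      Q ∈ Matrix.unitaryGroup (Fin n) ℂ ∧
      V = ((posSemidefSqrt hΘ.posSemidef)⁻¹).map ((↑) : ℝ → ℂ) * Q ∧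
      D.IsDiag ∧ (∀ i : Fin n, (D i i).re = 1) ∧
      IsUnit V ∧ P⁻¹ * A = V * D * V⁻¹ ∧
      spectralCond V = spectralCond (((posSemidefSqrt hΘ.posSemidef)⁻¹).map ((↑) : ℝ → ℂ)) ∧
      spectralCond V = Real.sqrt (lmax / lmin) := by
  classical
  have hH : Θ.IsHermitian := hΘ.posSemidef.1
  set ev : Fin n → ℝ := hH.eigenvalues with hev
  set Ur : Matrix (Fin n) (Fin n) ℝ := (hH.eigenvectorUnitary : Matrix (Fin n) (Fin n) ℝ) with hUr
  set S : Matrix (Fin n) (Fin n) ℝ := posSemidefSqrt hΘ.posSemidef with hSdef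
  have hS : S = Ur * Matrix.diagonal (RCLike.ofReal ∘ Real.sqrt ∘ ev) * star Ur := rfl
  -- eigenvalue facts
  have hev_pos : ∀ i, 0 < ev i := fun i => hΘ.eigenvalues_pos i
  obtain ⟨x0, hx0, hmv0⟩ := hmin.1
  obtain ⟨j0, hj0⟩ := mem_ev Θ hH lmin x0 hx0 hmv0
  obtain ⟨x1, hx1, hmv1⟩ := hmax.1
  obtain ⟨j1, hj1⟩ := mem_ev Θ hH lmax x1 hx1 hmv1
  have hbound : ∀ j, lmin ≤ ev j ∧ ev j ≤ lmax := by
    intro j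
    obtain ⟨x, hx, hmv⟩ := ev_mem Θ hH j
    exact ⟨hmin.2 ⟨x, hx, hmv⟩, hmax.2 ⟨x, hx, hmv⟩⟩
  have hlmin_pos : 0 < lmin := hj0 ▸ hev_pos j0
  have hlmax_pos : 0 < lmax := hj1 ▸ hev_pos j1
  -- complex matrices
  set Θc : Matrix (Fin n) (Fin n) ℂ := Θ.map ((↑) : ℝ → ℂ) with hΘc
  set Ψc : Matrix (Fin n) (Fin n) ℂ := Ψ.map ((↑) : ℝ → ℂ) with hΨc
  set Sc : Matrix (Fin n) (Fin n) ℂ := S.map ((↑) : ℝ → ℂ) with hSc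
  set Uc : Matrix (Fin n) (Fin n) ℂ := Ur.map ((↑) : ℝ → ℂ) with hUc
  set dc : Fin n → ℂ := fun i => ((Real.sqrt (ev i) : ℝ) : ℂ) with hdc
  have hUrU : Ur * star Ur = 1 := Matrix.mem_unitaryGroup_iff.mp hH.eigenvectorUnitary.2
  have hUcU : Uc * star Uc = 1 := by
    rw [hUc, ← mapC_star, ← mapC_mul, hUrU, mapC_one]
  have hUcmem : Uc ∈ Matrix.unitaryGroup (Fin n) ℂ := Matrix.mem_unitaryGroup_iff.mpr hUcU
  have hScdef : Sc = Uc * Matrix.diagonal dc * star Uc := by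
    rw [hSc, hS, mapC_mul, mapC_mul, mapC_star, Matrix.diagonal_map (by simp)]
    rfl
  have hSS : S * S = Θ := by
    have hUs : star Ur * Ur = 1 := Matrix.mem_unitaryGroup_iff'.mp hH.eigenvectorUnitary.2
    have hdd : diagonal ((RCLike.ofReal : ℝ → ℝ) ∘ Real.sqrt ∘ ev) * diagonal ((RCLike.ofReal : ℝ → ℝ) ∘ Real.sqrt ∘ ev)
        = diagonal ((RCLike.ofReal : ℝ → ℝ) ∘ ev) := by
      rw [diagonal_mul_diagonal]
      congr 1
      funext i
      simp [Real.mul_self_sqrt (hev_pos i).le]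
    rw [hS, show Ur * diagonal ((RCLike.ofReal : ℝ → ℝ) ∘ Real.sqrt ∘ ev) * star Ur *
        (Ur * diagonal ((RCLike.ofReal : ℝ → ℝ) ∘ Real.sqrt ∘ ev) * star Ur)
        = Ur * (diagonal ((RCLike.ofReal : ℝ → ℝ) ∘ Real.sqrt ∘ ev) * (star Ur * Ur) *
          diagonal ((RCLike.ofReal : ℝ → ℝ) ∘ Real.sqrt ∘ ev)) * star Ur by simp only [Matrix.mul_assoc],
      hUs, Matrix.mul_one, hdd]
    conv_rhs => rw [hH.spectral_theorem]
    rw [Unitary.conjStarAlgAut_apply]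
  have hΘcSS : Θc = Sc * Sc := by rw [hΘc, hSc, ← mapC_mul, hSS]
  -- determinants
  have hdetS : IsUnit S.det := by
    have h : S.det * S.det = Θ.det := by rw [← Matrix.det_mul, hSS]
    have := hΘ.det_pos
    refine isUnit_iff_ne_zero.mpr fun h0 => ?_
    rw [h0, mul_zero] at h
    rw [← h] at this
    exact lt_irrefl 0 this
  have hdetSc : IsUnit Sc.det := by
    have h : Sc.det = ((S.det : ℝ) : ℂ) := by
      rw [hSc, show (S.map ((↑) : ℝ → ℂ)) = Complex.ofRealHom.mapMatrix S from rfl]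
      exact (RingHom.map_det Complex.ofRealHom S).symm
    rw [h]
    exact isUnit_iff_ne_zero.mpr (by exact_mod_cast hdetS.ne_zero)
  have hScinvSc : Sc⁻¹ * Sc = 1 := Matrix.nonsing_inv_mul Sc hdetSc
  have hScScinv : Sc * Sc⁻¹ = 1 := Matrix.mul_nonsing_inv Sc hdetSc
  have hmapinv : (S⁻¹).map ((↑) : ℝ → ℂ) = Sc⁻¹ := by
    apply (Matrix.inv_eq_left_inv _).symm
    rw [hSc, ← mapC_mul, Matrix.nonsing_inv_mul S hdetS, mapC_one]
  have hΘcinv : Θc⁻¹ = Sc⁻¹ * Sc⁻¹ := by rw [hΘcSS, Matrix.mul_inv_rev]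
  -- Hermitian/skew facts
  have hSherm : star S = S := by
    rw [hS]
    simp only [Matrix.star_mul, star_star, Matrix.mul_assoc, Matrix.star_eq_conjTranspose,
      Matrix.diagonal_conjTranspose, star_trivial,
      Matrix.conjTranspose_conjTranspose]
  have hScH : star Sc = Sc := by rw [hSc, ← mapC_star, hSherm]
  have hstarΨ : star Ψ = Ψᵀ := by ext i j; simp [Matrix.conjTranspose_apply]
  have hΨcH : star Ψc = -Ψc := by
    rw [hΨc, ← mapC_star, hstarΨ, hΨ]
    ext i j; simp [Matrix.map_apply]
  have hScinvH : star (Sc⁻¹) = Sc⁻¹ := by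
    rw [show star (Sc⁻¹) = Sc⁻¹ᴴ from rfl, Matrix.conjTranspose_nonsing_inv,
      show Scᴴ = star Sc from rfl, hScH]
  -- skew-Hermitian K and Hermitian M
  set K : Matrix (Fin n) (Fin n) ℂ := Sc⁻¹ * Ψc * Sc⁻¹ with hK
  have hKH : star K = -K := by
    rw [hK, show star (Sc⁻¹ * Ψc * Sc⁻¹) = (Sc⁻¹ * Ψc * Sc⁻¹)ᴴ from rfl,
      Matrix.conjTranspose_mul, Matrix.conjTranspose_mul]
    rw [show (Sc⁻¹)ᴴ = star (Sc⁻¹) from rfl, show (Ψc)ᴴ = star Ψc from rfl, hScinvH, hΨcH]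
    simp [Matrix.mul_neg, Matrix.neg_mul, Matrix.mul_assoc]
  have hM : (Complex.I • K).IsHermitian := by
    show star (Complex.I • K) = Complex.I • K
    rw [show star (Complex.I • K) = (Complex.I • K)ᴴ from rfl, Matrix.conjTranspose_smul,
      show Kᴴ = star K from rfl, hKH, Complex.star_def, Complex.conj_I, neg_smul, smul_neg,
      neg_neg]
  set μ : Fin n → ℝ := hM.eigenvalues with hμ
  set Q : Matrix (Fin n) (Fin n) ℂ := (hM.eigenvectorUnitary : Matrix (Fin n) (Fin n) ℂ) with hQ
  have hQmem : Q ∈ Matrix.unitaryGroup (Fin n) ℂ := hM.eigenvectorUnitary.2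
  have hQQs : Q * star Q = 1 := Matrix.mem_unitaryGroup_iff.mp hQmem
  have hQsQ : star Q * Q = 1 := Matrix.mem_unitaryGroup_iff'.mp hQmem
  have hspec : Complex.I • K = Q * Matrix.diagonal (RCLike.ofReal ∘ μ) * star Q :=
    hM.spectral_theorem
  have hKspec : K = Q * ((-Complex.I) • Matrix.diagonal (RCLike.ofReal ∘ μ)) * star Q := by
    have h : K = (-Complex.I) • (Complex.I • K) := by
      rw [smul_smul]
      norm_num [Complex.I_mul_I]
    rw [h, hspec]
    simp [Matrix.smul_mul, Matrix.mul_smul]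
  -- diagonal D
  set D : Matrix (Fin n) (Fin n) ℂ :=
    1 + ((a : ℂ))⁻¹ • ((-Complex.I) • Matrix.diagonal (RCLike.ofReal ∘ μ)) with hD
  have haC : (a : ℂ) ≠ 0 := Complex.ofReal_ne_zero.mpr ha.ne'
  have hDdiag : D.IsDiag := by
    rw [hD]
    apply Matrix.IsDiag.add
    · exact Matrix.isDiag_one
    · exact ((Matrix.isDiag_diagonal _).smul _).smul _
  have hDre : ∀ i, (D i i).re = 1 := by
    intro i
    rw [hD]
    simp [Matrix.one_apply, Matrix.diagonal_apply, Complex.ext_iff]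
  -- V and its inverse
  set V : Matrix (Fin n) (Fin n) ℂ := (S⁻¹).map ((↑) : ℝ → ℂ) * Q with hV
  have hVSc : V = Sc⁻¹ * Q := by rw [hV, hmapinv]
  have hVright : V * (star Q * Sc) = 1 := by
    rw [hVSc, Matrix.mul_assoc, ← Matrix.mul_assoc Q, hQQs, Matrix.one_mul, hScinvSc]
  have hVinv : V⁻¹ = star Q * Sc := Matrix.inv_eq_right_inv hVright
  have hVunit : IsUnit V :=
    (Matrix.isUnit_iff_isUnit_det V).mpr (Matrix.isUnit_det_of_right_inverse hVright)
  -- determinant of Θc and P⁻¹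
  have hdetΘc : IsUnit Θc.det := by
    rw [hΘcSS, Matrix.det_mul]
    exact hdetSc.mul hdetSc
  have hΘcinvΘc : Θc⁻¹ * Θc = 1 := Matrix.nonsing_inv_mul Θc hdetΘc
  have hΘcΘcinv : Θc * Θc⁻¹ = 1 := Matrix.mul_nonsing_inv Θc hdetΘc
  have hPinv : P⁻¹ = ((a : ℂ))⁻¹ • Θc⁻¹ := by
    apply Matrix.inv_eq_left_inv
    rw [hP, Matrix.smul_mul, Matrix.mul_smul, smul_smul, inv_mul_cancel₀ haC, one_smul, hΘcinvΘc]
  -- the main similarity identity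
  have hQDQ : Q * D * star Q = 1 + ((a : ℂ))⁻¹ • K := by
    rw [hD, Matrix.mul_add, Matrix.add_mul, Matrix.mul_one, hQQs, hKspec]
    congr 1
    simp [Matrix.mul_smul, Matrix.smul_mul]
  have hScKSc : Sc⁻¹ * K * Sc = Θc⁻¹ * Ψc := by
    rw [hΘcinv, hK]
    simp only [Matrix.mul_assoc]
    rw [hScinvSc, Matrix.mul_one]
  have hmain : P⁻¹ * A = V * D * V⁻¹ := by
    have hrhs : V * D * V⁻¹ = 1 + ((a : ℂ))⁻¹ • (Θc⁻¹ * Ψc) := by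
      rw [hVinv, hVSc]
      calc Sc⁻¹ * Q * D * (star Q * Sc) = Sc⁻¹ * (Q * D * star Q) * Sc := by
            simp only [Matrix.mul_assoc]
        _ = Sc⁻¹ * (1 + ((a : ℂ))⁻¹ • K) * Sc := by rw [hQDQ]
        _ = Sc⁻¹ * Sc + ((a : ℂ))⁻¹ • (Sc⁻¹ * K * Sc) := by
            rw [Matrix.mul_add, Matrix.add_mul, Matrix.mul_one, Matrix.mul_smul,
              Matrix.smul_mul, Matrix.mul_assoc]
        _ = 1 + ((a : ℂ))⁻¹ • (Θc⁻¹ * Ψc) := by rw [hScinvSc, hScKSc]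
    rw [hrhs, hPinv, hA, Matrix.mul_add]
    congr 1
    · rw [Matrix.smul_mul, Matrix.mul_smul, smul_smul, inv_mul_cancel₀ haC, one_smul, hΘcinvΘc]
    · rw [Matrix.smul_mul]
  -- norms
  have hUsU : star Uc * Uc = 1 := Matrix.mem_unitaryGroup_iff'.mp hUcmem
  have hφQ : (Matrix.toEuclideanCLM (𝕜 := ℂ) Q) ∈
      unitary (EuclideanSpace ℂ (Fin n) →L[ℂ] EuclideanSpace ℂ (Fin n)) := by
    rw [Unitary.mem_iff]
    constructor
    · rw [← StarHomClass.map_star, ← _root_.map_mul, hQsQ, _root_.map_one]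
    · rw [← StarHomClass.map_star, ← _root_.map_mul, hQQs, _root_.map_one]
  have hφUc : (Matrix.toEuclideanCLM (𝕜 := ℂ) Uc) ∈
      unitary (EuclideanSpace ℂ (Fin n) →L[ℂ] EuclideanSpace ℂ (Fin n)) := by
    rw [Unitary.mem_iff]
    constructor
    · rw [← StarHomClass.map_star, ← _root_.map_mul, hUsU, _root_.map_one]
    · rw [← StarHomClass.map_star, ← _root_.map_mul, hUcU, _root_.map_one]
  have hnV : ‖Matrix.toEuclideanCLM (𝕜 := ℂ) V‖ = ‖Matrix.toEuclideanCLM (𝕜 := ℂ) Sc⁻¹‖ := by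
    rw [hVSc, _root_.map_mul]
    exact CStarRing.norm_mul_mem_unitary _ hφQ
  have hnVinv : ‖Matrix.toEuclideanCLM (𝕜 := ℂ) V⁻¹‖ = ‖Matrix.toEuclideanCLM (𝕜 := ℂ) Sc‖ := by
    rw [hVinv, _root_.map_mul, StarHomClass.map_star]
    exact CStarRing.norm_mem_unitary_mul _ (Unitary.star_mem hφQ)
  have hnSc : ‖Matrix.toEuclideanCLM (𝕜 := ℂ) Sc‖ = Real.sqrt lmax := by
    rw [hScdef, _root_.map_mul, _root_.map_mul, mul_assoc, CStarRing.norm_mem_unitary_mul _ hφUc, StarHomClass.map_star,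
      CStarRing.norm_mul_mem_unitary _ (Unitary.star_mem hφUc)]
    apply norm_toEuclideanCLM_diagonal
    · intro i
      simp only [hdc, Complex.norm_real, Real.norm_eq_abs, abs_of_nonneg (Real.sqrt_nonneg _)]
      exact Real.sqrt_le_sqrt (hbound i).2
    · refine ⟨j1, ?_⟩
      simp only [hdc, Complex.norm_real, Real.norm_eq_abs, abs_of_nonneg (Real.sqrt_nonneg _)]
      rw [show ev j1 = lmax from hj1]
  -- inverse of Sc explicitly
  set dinv : Fin n → ℂ := fun i => (((Real.sqrt (ev i))⁻¹ : ℝ) : ℂ) with hdinv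
  have hconj : ∀ X Y : Matrix (Fin n) (Fin n) ℂ,
      (Uc * X * star Uc) * (Uc * Y * star Uc) = Uc * (X * Y) * star Uc := by
    intro X Y
    calc (Uc * X * star Uc) * (Uc * Y * star Uc)
        = Uc * (X * ((star Uc * Uc) * (Y * star Uc))) := by simp only [Matrix.mul_assoc]
      _ = Uc * (X * Y) * star Uc := by
          rw [hUsU, Matrix.one_mul]
          simp only [Matrix.mul_assoc]
  have hdcdinv : ∀ i, dc i * dinv i = 1 := by
    intro i
    rw [hdc, hdinv, ← Complex.ofReal_mul,
      mul_inv_cancel₀ (ne_of_gt (Real.sqrt_pos.mpr (hev_pos i))), Complex.ofReal_one]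
  have hScinvdef : Sc⁻¹ = Uc * Matrix.diagonal dinv * star Uc := by
    apply Matrix.inv_eq_right_inv
    rw [hScdef, hconj, Matrix.diagonal_mul_diagonal,
      show (fun i => dc i * dinv i) = fun _ => (1 : ℂ) from funext hdcdinv, Matrix.diagonal_one,
      Matrix.mul_one, hUcU]
  have hnScinv : ‖Matrix.toEuclideanCLM (𝕜 := ℂ) Sc⁻¹‖ = (Real.sqrt lmin)⁻¹ := by
    rw [hScinvdef, _root_.map_mul, _root_.map_mul, mul_assoc, CStarRing.norm_mem_unitary_mul _ hφUc, StarHomClass.map_star,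
      CStarRing.norm_mul_mem_unitary _ (Unitary.star_mem hφUc)]
    apply norm_toEuclideanCLM_diagonal
    · intro i
      have hnn : (0:ℝ) ≤ (Real.sqrt (ev i))⁻¹ := by positivity
      simp only [hdinv, Complex.norm_real, Real.norm_eq_abs, abs_of_nonneg hnn]
      exact inv_anti₀ (Real.sqrt_pos.mpr hlmin_pos) (Real.sqrt_le_sqrt (hbound i).1)
    · refine ⟨j0, ?_⟩
      have hnn : (0:ℝ) ≤ (Real.sqrt (ev j0))⁻¹ := by positivity
      simp only [hdinv, Complex.norm_real, Real.norm_eq_abs, abs_of_nonneg hnn]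
      rw [show ev j0 = lmin from hj0]
  have hcond1 : spectralCond V = spectralCond ((S⁻¹).map ((↑) : ℝ → ℂ)) := by
    rw [spectralCond, spectralCond, hnV, hnVinv, hmapinv,
      Matrix.nonsing_inv_nonsing_inv Sc hdetSc]
  have hcond2 : spectralCond V = Real.sqrt (lmax / lmin) := by
    rw [spectralCond, hnV, hnVinv, hnSc, hnScinv,
      Real.sqrt_div hlmax_pos.le, div_eq_mul_inv, mul_comm]
  exact ⟨V, D, Q, hQmem, hV, hDdiag, hDre, hVunit, hmain, hcond1, hcond2⟩
end
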